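/- Let p be a real polynomial with p(0) = 0, |p(x)| ≤ |x| on [−1,1], and let A be an n×n correlation matrix (symmetric positive semidefinite with unit diagonal) whose condition number λ_max(A)/λ_min(A) is at most p₊(1)/p₋(1) (with p₋(1) > 0). Then p*[A], the matrix with p applied to off-diagonal entries and unit diagonal, is positive semidefinite. -/

import Mathlib

/-- `f*[A]`: apply `f` to off-diagonal entries, leave diagonal unchanged. -/
def offDiagApply {n : ℕ} (f : ℝ → ℝ) (A : Matrix (Fin n) (Fin n) ℝ) :
    Matrix (Fin n) (Fin n) ℝ :=
  Matrix.of fun i j => if i = j then A i i else f (A i j)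

/-- The "positive part" `p₊(x) = ∑_{cᵢ > 0} cᵢ xⁱ` of a polynomial. -/
noncomputable def polyPosPart (p : Polynomial ℝ) (x : ℝ) : ℝ :=
  ∑ i ∈ p.support, if 0 < p.coeff i then p.coeff i * x ^ i else 0

/-- The "negative part" `p₋(x) = −∑_{cᵢ < 0} cᵢ xⁱ` of a polynomial. -/
noncomputable def polyNegPart (p : Polynomial ℝ) (x : ℝ) : ℝ :=
  -∑ i ∈ p.support, if p.coeff i < 0 then p.coeff i * x ^ i else 0

theorem realSymm' {n : ℕ} {A : Matrix (Fin n) (Fin n) ℝ} (hA : A.IsHermitian) (i j : Fin n) :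
    A i j = A j i := by
  conv_lhs => rw [← hA]
  simp [Matrix.conjTranspose_apply]

private theorem sum3_comm {n : ℕ} (g : Fin n → Fin n → Fin n → ℝ) :
    (∑ i, ∑ j, ∑ k, g i j k) = ∑ k, ∑ i, ∑ j, g i j k := by
  calc (∑ i, ∑ j, ∑ k, g i j k) = ∑ i, ∑ k, ∑ j, g i j k :=
        Finset.sum_congr rfl fun i _ => Finset.sum_comm
    _ = ∑ k, ∑ i, ∑ j, g i j k := Finset.sum_comm

open Matrix in
/-- **Schur product theorem** over ℝ. -/
theorem schurProduct {n : ℕ} {A B : Matrix (Fin n) (Fin n) ℝ}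
    (hA : A.PosSemidef) (hB : B.PosSemidef) : (A ⊙ B).PosSemidef := by
  obtain ⟨C, hC⟩ : ∃ C : Matrix (Fin n) (Fin n) ℝ, A = Cᴴ * C := by
    open scoped MatrixOrder in
    have h0 : 0 ≤ A := Matrix.nonneg_iff_posSemidef.mpr hA
    open scoped MatrixOrder in
    refine ⟨CFC.sqrt A, ?_⟩
    open scoped MatrixOrder in
    rw [← Matrix.star_eq_conjTranspose, (IsSelfAdjoint.of_nonneg (CFC.sqrt_nonneg A)).star_eq,
      CFC.sqrt_mul_sqrt_self A h0]
  refine Matrix.posSemidef_iff_dotProduct_mulVec.mpr ⟨?_, ?_⟩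
  · ext i j
    simp only [Matrix.conjTranspose_apply, Matrix.hadamard_apply, star_trivial]
    rw [realSymm' hA.1 j i, realSymm' hB.1 j i]
  · intro x
    set f : Fin n → Fin n → Fin n → ℝ :=
      fun i j k => (C k i * x i) * B i j * (C k j * x j) with hf
    have hL : dotProduct (star x) ((A ⊙ B) *ᵥ x) = ∑ i, ∑ j, ∑ k, f i j k := by
      simp only [dotProduct, Matrix.mulVec, dotProduct, Matrix.hadamard_apply, star_trivial]
      refine Finset.sum_congr rfl fun i _ => ?_
      rw [Finset.mul_sum]
      refine Finset.sum_congr rfl fun j _ => ?_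
      have hAij : A i j = ∑ k, C k i * C k j := by
        rw [hC]; simp [Matrix.mul_apply, Matrix.conjTranspose_apply]
      rw [hAij, Finset.sum_mul, Finset.sum_mul, Finset.mul_sum]
      exact Finset.sum_congr rfl fun k _ => by simp only [hf]; ring
    have hR : ∀ k, (∑ i, ∑ j, f i j k) =
        dotProduct (star (fun i => C k i * x i)) (B *ᵥ (fun i => C k i * x i)) := by
      intro k
      simp only [dotProduct, Matrix.mulVec, dotProduct, star_trivial]
      refine Finset.sum_congr rfl fun i _ => ?_
      rw [Finset.mul_sum]
      exact Finset.sum_congr rfl fun j _ => by simp only [hf]; ring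
    rw [hL, sum3_comm]
    exact Finset.sum_nonneg fun k _ => by rw [hR k]; exact hB.dotProduct_mulVec_nonneg _

open Matrix in
theorem sandwich_eig {n : ℕ} [NeZero n] {A : Matrix (Fin n) (Fin n) ℝ} (hA : A.IsHermitian) :
    (A - (⨅ j, hA.eigenvalues j) • (1 : Matrix (Fin n) (Fin n) ℝ)).PosSemidef ∧
    ((⨆ j, hA.eigenvalues j) • (1 : Matrix (Fin n) (Fin n) ℝ) - A).PosSemidef := by
  set U : Matrix (Fin n) (Fin n) ℝ := (hA.eigenvectorUnitary : Matrix (Fin n) (Fin n) ℝ) with hU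
  have hUU : U * star U = 1 := Matrix.mem_unitaryGroup_iff.mp hA.eigenvectorUnitary.2
  have hsm : ∀ c : ℝ, c • (1 : Matrix (Fin n) (Fin n) ℝ) =
      U * Matrix.diagonal (fun _ => c) * star U := by
    intro c
    rw [← Matrix.smul_one_eq_diagonal]
    rw [Matrix.mul_smul, smul_mul_assoc, mul_one, hUU]
  have hspec : A = U * Matrix.diagonal hA.eigenvalues * star U := by
    have := hA.spectral_theorem
    simpa using this
  constructor
  · have key : A - (⨅ j, hA.eigenvalues j) • 1 =
        U * (Matrix.diagonal hA.eigenvalues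
          - Matrix.diagonal (fun _ => ⨅ j, hA.eigenvalues j)) * star U := by
      rw [Matrix.mul_sub, Matrix.sub_mul, ← hspec, ← hsm]
    rw [key, Matrix.diagonal_sub]
    exact (Matrix.PosSemidef.diagonal fun i =>
      sub_nonneg.mpr
        (ciInf_le (Set.Finite.bddBelow (Set.finite_range _)) i)).mul_mul_conjTranspose_same U
  · have key : (⨆ j, hA.eigenvalues j) • 1 - A =
        U * (Matrix.diagonal (fun _ => ⨆ j, hA.eigenvalues j)
          - Matrix.diagonal hA.eigenvalues) * star U := by
      rw [Matrix.mul_sub, Matrix.sub_mul, ← hspec, ← hsm]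
    rw [key, Matrix.diagonal_sub]
    exact (Matrix.PosSemidef.diagonal fun i =>
      sub_nonneg.mpr
        (le_ciSup (Set.Finite.bddAbove (Set.finite_range _)) i)).mul_mul_conjTranspose_same U

theorem psd_smul {n : ℕ} {M : Matrix (Fin n) (Fin n) ℝ} (hM : M.PosSemidef) {c : ℝ}
    (hc : 0 ≤ c) : (c • M).PosSemidef := by
  refine Matrix.posSemidef_iff_dotProduct_mulVec.mpr ⟨?_, ?_⟩
  · show (c • M).conjTranspose = c • M
    rw [Matrix.conjTranspose_smul, hM.1]
    simp
  · intro x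
    rw [Matrix.smul_mulVec, dotProduct_smul, smul_eq_mul]
    exact mul_nonneg hc (hM.dotProduct_mulVec_nonneg x)

theorem psd_smul_one {n : ℕ} {c : ℝ} (hc : 0 ≤ c) :
    (c • (1 : Matrix (Fin n) (Fin n) ℝ)).PosSemidef := by
  rw [Matrix.smul_one_eq_diagonal]
  exact Matrix.PosSemidef.diagonal fun _ => hc

theorem psd_sum {n : ℕ} (s : Finset ℕ) (F : ℕ → Matrix (Fin n) (Fin n) ℝ)
    (h : ∀ k ∈ s, (F k).PosSemidef) : (∑ k ∈ s, F k).PosSemidef :=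
  Finset.sum_induction F Matrix.PosSemidef (fun _ _ ha hb => ha.add hb) .zero h

theorem stmt_17 (n : ℕ) [NeZero n] (p : Polynomial ℝ) (hp0 : p.coeff 0 = 0)
    (hp : ∀ x ∈ Set.Icc (-1 : ℝ) 1, |p.eval x| ≤ |x|)
    (A : Matrix (Fin n) (Fin n) ℝ) (hA : A.PosSemidef)
    (hdiag : ∀ i, A i i = 1)
    (hneg : 0 < polyNegPart p 1)
    (hcond : polyNegPart p 1 * (⨆ j, hA.isHermitian.eigenvalues j) ≤
      polyPosPart p 1 * (⨅ j, hA.isHermitian.eigenvalues j)) :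
    (offDiagApply p.eval A).PosSemidef := by
  classical
  set l : ℝ := ⨅ j, hA.isHermitian.eigenvalues j with hl
  set m : ℝ := ⨆ j, hA.isHermitian.eigenvalues j with hm
  set hpow : ℕ → Matrix (Fin n) (Fin n) ℝ :=
    fun k => Matrix.of fun i j => (A i j) ^ k with hhpow
  -- sandwich for Hadamard powers
  have sandwich : ∀ k : ℕ, 1 ≤ k →
      (hpow k - l • 1).PosSemidef ∧ ((m • 1 : Matrix (Fin n) (Fin n) ℝ) - hpow k).PosSemidef := by
    intro k hk
    induction k, hk using Nat.le_induction with
    | base =>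
      have h1 : hpow 1 = A := by ext i j; simp [hhpow]
      rw [h1]
      exact sandwich_eig hA.isHermitian
    | succ k hk ih =>
      have e1 : hpow (k + 1) - l • 1 = Matrix.hadamard A (hpow k - l • 1) := by
        ext i j
        simp only [Matrix.sub_apply, Matrix.smul_apply, Matrix.one_apply, Matrix.hadamard_apply,
          hhpow, Matrix.of_apply, smul_eq_mul]
        by_cases h : i = j
        · subst h; simp [hdiag i, mul_comm]
        · simp [h]; ring
      have e2 : (m • 1 : Matrix (Fin n) (Fin n) ℝ) - hpow (k + 1) =
          Matrix.hadamard A ((m • 1 : Matrix (Fin n) (Fin n) ℝ) - hpow k) := by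
        ext i j
        simp only [Matrix.sub_apply, Matrix.smul_apply, Matrix.one_apply, Matrix.hadamard_apply,
          hhpow, Matrix.of_apply, smul_eq_mul]
        by_cases h : i = j
        · subst h; simp [hdiag i, mul_comm]
        · simp [h]; ring
      exact ⟨e1 ▸ schurProduct hA ih.1, e2 ▸ schurProduct hA ih.2⟩
  -- each summand
  set G : ℕ → Matrix (Fin n) (Fin n) ℝ :=
    fun k => if 0 < p.coeff k then p.coeff k • (hpow k - l • 1)
      else (-p.coeff k) • ((m • 1 : Matrix (Fin n) (Fin n) ℝ) - hpow k) with hG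
  have hTpsd : (∑ k ∈ p.support, G k).PosSemidef := by
    refine psd_sum _ _ fun k hks => ?_
    have hk0 : p.coeff k ≠ 0 := Polynomial.mem_support_iff.mp hks
    have hk1 : 1 ≤ k := by
      rcases Nat.eq_zero_or_pos k with h | h
      · exact absurd (h ▸ hp0) hk0
      · exact h
    by_cases hc : 0 < p.coeff k
    · simpa [hG, hc] using psd_smul (sandwich k hk1).1 hc.le
    · have : 0 ≤ -p.coeff k := by
        rcases lt_trichotomy (p.coeff k) 0 with h | h | h
        · linarith
        · exact absurd h hk0
        · exact absurd h hc
      simpa [hG, hc] using psd_smul (sandwich k hk1).2 this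
  -- scalar facts
  have hc1 : 0 ≤ polyPosPart p 1 * l - polyNegPart p 1 * m := sub_nonneg.mpr hcond
  have hc2 : 0 ≤ 1 - p.eval 1 := by
    have := hp 1 ⟨by norm_num, le_refl 1⟩
    have h1 := (abs_le.mp (by simpa using this)).2
    linarith
  -- the decomposition
  have hdecomp : offDiagApply p.eval A = (∑ k ∈ p.support, G k)
      + ((polyPosPart p 1 * l - polyNegPart p 1 * m) • (1 : Matrix (Fin n) (Fin n) ℝ)
        + (1 - p.eval 1) • (1 : Matrix (Fin n) (Fin n) ℝ)) := by
    have heval : ∀ x : ℝ, p.eval x = ∑ k ∈ p.support, p.coeff k * x ^ k := by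
      intro x; rw [Polynomial.eval_eq_sum, Polynomial.sum]
    ext i j
    have hGk : ∀ k, G k i j = (if 0 < p.coeff k then
          p.coeff k * ((A i j) ^ k - l * (if i = j then (1:ℝ) else 0))
        else (-p.coeff k) * (m * (if i = j then (1:ℝ) else 0) - (A i j) ^ k)) := by
      intro k
      by_cases hc : 0 < p.coeff k <;>
        simp [hG, hc, Matrix.sub_apply, Matrix.smul_apply, Matrix.one_apply, hhpow]
    simp only [offDiagApply, Matrix.of_apply, Matrix.add_apply, Matrix.sum_apply,
      Matrix.smul_apply, Matrix.one_apply, smul_eq_mul]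
    rw [Finset.sum_congr rfl fun k _ => hGk k]
    by_cases h : i = j
    · subst h
      simp only [if_pos rfl, eq_self_iff_true, if_true, hdiag i, one_pow, mul_one]
      have key : (∑ k ∈ p.support, (if 0 < p.coeff k then
            p.coeff k * (1 - l) else (-p.coeff k) * (m - 1)))
          = p.eval 1 - polyPosPart p 1 * l + polyNegPart p 1 * m := by
        rw [heval 1, polyPosPart, polyNegPart, neg_mul, Finset.sum_mul, Finset.sum_mul,
          ← sub_eq_add_neg, ← Finset.sum_sub_distrib, ← Finset.sum_sub_distrib]
        refine Finset.sum_congr rfl fun k hks => ?_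
        have hk0 : p.coeff k ≠ 0 := Polynomial.mem_support_iff.mp hks
        rcases lt_trichotomy (p.coeff k) 0 with hc | hc | hc
        · rw [if_neg (by linarith), if_neg (by linarith), if_pos hc]; ring
        · exact absurd hc hk0
        · rw [if_pos hc, if_pos hc, if_neg (by linarith)]; ring
      rw [key]
      ring
    · simp only [if_neg h, mul_zero, mul_one, sub_zero, zero_sub, add_zero, mul_zero]
      rw [heval (A i j)]
      refine Finset.sum_congr rfl fun k hks => ?_
      by_cases hc : 0 < p.coeff k
      · rw [if_pos hc]
      · rw [if_neg hc]; ring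
  rw [hdecomp]
  exact hTpsd.add ((psd_smul_one hc1).add (psd_smul_one hc2))
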